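/- Let G be a connected graph with at least 3 vertices. If G is complete, then the rotation graph R(G) is bipartite with chromatic number 2; in fact, the map assigning to each search tree (which is a path, identified with a permutation of the vertices) the sign of the corresponding permutation is a proper 2-coloring of R(G). -/

import Mathlib

open scoped Classical

universe u

variable {V : Type u}

/-- A rooted tree structure on a support set: data only, well-formedness is `RTree.WF`. -/
structure RTree (V : Type u) where
  supp : Set V
  root : V
  parent : V → Option V

namespace RTree

def parentRel (T : RTree V) (a b : V) : Prop := T.parent a = some b

/-- `u` is an ancestor of `v` in `T` (reflexively). -/
def isAncestor (T : RTree V) (u v : V) : Prop :=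
  Relation.ReflTransGen T.parentRel v u

def WF (T : RTree V) : Prop :=
  T.root ∈ T.supp ∧
  T.parent T.root = none ∧
  (∀ v, v ∉ T.supp → T.parent v = none) ∧
  (∀ v ∈ T.supp, v ≠ T.root → ∃ u ∈ T.supp, T.parent v = some u) ∧
  (∀ v ∈ T.supp, T.isAncestor T.root v)

/-- The vertex set of the subtree `T|c` rooted at `c`. -/
def descendants (T : RTree V) (c : V) : Set V :=
  {v | v ∈ T.supp ∧ T.isAncestor c v}

/-- Iterated parent. -/
def pIter (T : RTree V) : ℕ → V → Option V
  | 0, w => some w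
  | n + 1, w => (T.parent w).bind (T.pIter n)

/-- The depth `d_{T,v}` of `v` in `T` (distance to the root). -/
noncomputable def depthOf (T : RTree V) (v : V) : ℕ :=
  sInf {n | T.pIter n v = some T.root}

/-- The subtree of `T` rooted at `c`. -/
noncomputable def subtreeAt (T : RTree V) (c : V) : RTree V where
  supp := T.descendants c
  root := c
  parent := fun w => if w = c then none else if w ∈ T.descendants c then T.parent w else none

/-- The vertex at depth `i` on the path from the root to `v`. -/
noncomputable def ancAt (T : RTree V) (v : V) (i : ℕ) : V :=
  (T.pIter (T.depthOf v - i) v).getD T.root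

/-- Insertion `T(i,x,v)` of a new vertex `x` at depth `i` along the root-to-`v` path:
`i = 0` makes `x` the new root, `i = d_{T,v}+1` adds `x` as a new child of `v`, and
for `1 ≤ i ≤ d_{T,v}` the `i`-th edge of the root-to-`v` path is subdivided by `x`. -/
noncomputable def insertAt (T : RTree V) (i : ℕ) (x v : V) : RTree V :=
  if i = 0 then
    { supp := insert x T.supp
      root := x
      parent := fun w => if w = x then none else if w = T.root then some x else T.parent w }
  else if i = T.depthOf v + 1 then
    { supp := insert x T.supp
      root := T.root
      parent := fun w => if w = x then some v else T.parent w }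
  else
    { supp := insert x T.supp
      root := T.root
      parent := fun w =>
        if w = x then some (T.ancAt v (i - 1))
        else if w = T.ancAt v i then some x
        else T.parent w }

/-- Elimination `p(T,x)` of a vertex `x` (meaningful when `x` has at most one child). -/
noncomputable def elim (T : RTree V) (x : V) : RTree V where
  supp := T.supp \ {x}
  root :=
    if T.root = x then (if h : ∃ w, T.parent w = some x then h.choose else T.root) else T.root
  parent := fun w =>
    if w = x then none
    else if T.parent w = some x then T.parent x
    else T.parent w

end RTree

/-- Reachability inside the vertex set `s`, i.e. in the induced subgraph `G[s]`. -/
def reachWithin (G : SimpleGraph V) (s : Set V) : V → V → Prop :=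
  Relation.ReflTransGen (fun a b => a ∈ s ∧ b ∈ s ∧ G.Adj a b)

/-- Recursive definition of a search tree: the children of the root are the roots of
search trees on the connected components of the graph minus the root. -/
inductive IsSearchTreeRec {V : Type u} (G : SimpleGraph V) : RTree V → Prop
  | intro (T : RTree V) (hwf : T.WF)
      (hconn : ∀ a ∈ T.supp, ∀ b ∈ T.supp, reachWithin G T.supp a b)
      (hcomp : ∀ c, T.parent c = some T.root →
        ∀ w, w ∈ T.descendants c ↔
          (w ∈ T.supp ∧ w ≠ T.root ∧ reachWithin G (T.supp \ {T.root}) c w))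
      (hrec : ∀ c, T.parent c = some T.root → IsSearchTreeRec G (T.subtreeAt c)) :
      IsSearchTreeRec G T

/-- `T` is a search tree on the induced subgraph `G[s]`. -/
def IsSearchTreeOn (G : SimpleGraph V) (s : Set V) (T : RTree V) : Prop :=
  T.supp = s ∧ IsSearchTreeRec G T

/-- `T` is a search tree on `G`. -/
def IsSearchTree (G : SimpleGraph V) (T : RTree V) : Prop :=
  IsSearchTreeOn G Set.univ T

/-- The `uv`-rotation of `T` (for `v` a child of `u`): `u` becomes a child of `v`, `v` takes
`u`'s old parent, and each subtree `S` of `v` is reattached below `u` iff `u` has a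
`G`-neighbour in `S`. -/
noncomputable def rotate (G : SimpleGraph V) (T : RTree V) (u v : V) : RTree V where
  supp := T.supp
  root := if T.root = u then v else T.root
  parent := fun w =>
    if w = v then T.parent u
    else if w = u then some v
    else if T.parent w = some v then
      (if ∃ z ∈ T.descendants w, G.Adj u z then some u else some v)
    else T.parent w

def IsRotation (G : SimpleGraph V) (S S' : RTree V) : Prop :=
  ∃ u v, S.parent v = some u ∧ S' = rotate G S u v

def rotAdj (G : SimpleGraph V) (S S' : RTree V) : Prop :=
  S ≠ S' ∧ (IsRotation G S S' ∨ IsRotation G S' S)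

/-- The rotation graph of the induced subgraph `G[s]`: vertices are the search trees on
`G[s]`, two trees being adjacent iff they differ by a single rotation. -/
def rotationGraphOn (G : SimpleGraph V) (s : Set V) :
    SimpleGraph {T : RTree V // IsSearchTreeOn G s T} where
  Adj T T' := rotAdj G T.1 T'.1
  symm := ⟨fun T T' h => ⟨Ne.symm h.1, Or.symm h.2⟩⟩
  loopless := ⟨fun T h => h.1 rfl⟩

/-- A vertex of `K` of maximal depth in `T` (the vertex `v_{λ(T)}`). -/
noncomputable def deepestIn (T : RTree V) (K : Set V) : V :=
  if h : ∃ u, u ∈ K ∧ ∀ w ∈ K, T.depthOf w ≤ T.depthOf u then h.choose else T.root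

/-- `u` and `v` have different relative order in `T` and `T'`. -/
def diffRelOrder (T T' : RTree V) (u v : V) : Prop :=
  (T.isAncestor u v ∧ ¬ T'.isAncestor u v) ∨ (¬ T.isAncestor u v ∧ T'.isAncestor u v)

/-- The step from `S` to `S'` is a rotation of the pair `u`, `v`. -/
def isUVStep (G : SimpleGraph V) (u v : V) (S S' : RTree V) : Prop :=
  (S.parent v = some u ∧ S' = rotate G S u v) ∨ (S.parent u = some v ∧ S' = rotate G S v u)

/-- A threshold graph: obtainable from the one-vertex graph by repeatedly adding either an
isolated vertex or a universal vertex. -/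
def IsThresholdGraph {V : Type u} [Fintype V] (G : SimpleGraph V) : Prop :=
  ∃ e : Fin (Fintype.card V) ≃ V,
    ∀ i : Fin (Fintype.card V),
      (∀ j, j < i → ¬ G.Adj (e i) (e j)) ∨ (∀ j, j < i → G.Adj (e i) (e j))

/-- The complete split graph `SPK_{p,q}`: a clique of size `p` completely joined to an
independent set of size `q`. -/
def completeSplitGraph (p q : ℕ) : SimpleGraph (Fin p ⊕ Fin q) where
  Adj a b := a ≠ b ∧ (a.isLeft = true ∨ b.isLeft = true)
  symm := ⟨fun a b h => ⟨Ne.symm h.1, Or.symm h.2⟩⟩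
  loopless := ⟨fun a h => h.1 rfl⟩

namespace RTree

variable {T : RTree V}

/-- Each vertex has at most one child. -/
def Path (T : RTree V) : Prop :=
  ∀ ⦃x w w'⦄, T.parent w = some x → T.parent w' = some x → w = w'

lemma pIter_add (T : RTree V) (a b : ℕ) (v : V) :
    T.pIter (a + b) v = (T.pIter b v).bind (T.pIter a) := by
  induction b generalizing v with
  | zero => rfl
  | succ b ih =>
      show T.pIter (a + b + 1) v = _
      cases h : T.parent v with
      | none => simp [pIter, h]
      | some w => simp [pIter, h, ih]

lemma mem_of_parent (hwf : T.WF) {x y : V} (h : T.parent x = some y) :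
    x ∈ T.supp ∧ y ∈ T.supp ∧ x ≠ T.root := by
  have hxr : x ≠ T.root := by
    rintro rfl; rw [hwf.2.1] at h; simp at h
  have hx : x ∈ T.supp := by
    by_contra hx
    rw [hwf.2.2.1 x hx] at h; simp at h
  obtain ⟨u, hu, hpu⟩ := hwf.2.2.2.1 x hx hxr
  rw [hpu] at h
  exact ⟨hx, by injection h with h'; exact h' ▸ hu, hxr⟩

lemma exists_pIter_of_rtg {a b : V} (h : Relation.ReflTransGen T.parentRel a b) :
    ∃ n, T.pIter n a = some b := by
  induction h using Relation.ReflTransGen.head_induction_on with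
  | refl => exact ⟨0, rfl⟩
  | head hac _ ih =>
      obtain ⟨n, hn⟩ := ih
      rename_i a c _
      refine ⟨n + 1, ?_⟩
      show (T.parent a).bind (T.pIter n) = some b
      rw [show T.parent a = some c from hac]
      exact hn

lemma depthSet_nonempty (hwf : T.WF) {v : V} (hv : v ∈ T.supp) :
    {n | T.pIter n v = some T.root}.Nonempty :=
  exists_pIter_of_rtg (hwf.2.2.2.2 v hv)

lemma pIter_depthOf (hwf : T.WF) {v : V} (hv : v ∈ T.supp) :
    T.pIter (T.depthOf v) v = some T.root :=
  Nat.sInf_mem (depthSet_nonempty hwf hv)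

lemma depthOf_root (T : RTree V) : T.depthOf T.root = 0 :=
  Nat.le_zero.1 (Nat.sInf_le rfl)

lemma eq_root_of_depthOf_eq_zero (hwf : T.WF) {v : V} (hv : v ∈ T.supp)
    (h : T.depthOf v = 0) : v = T.root := by
  have := pIter_depthOf hwf hv
  rw [h] at this
  injection this

lemma depthOf_parent (hwf : T.WF) {v p : V} (h : T.parent v = some p) :
    T.depthOf v = T.depthOf p + 1 := by
  obtain ⟨hv, hp, hvr⟩ := mem_of_parent hwf h
  have key : ∀ m, T.pIter (m + 1) v = T.pIter m p := by
    intro m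
    show (T.parent v).bind (T.pIter m) = _
    rw [h]; rfl
  have hle : T.depthOf v ≤ T.depthOf p + 1 :=
    Nat.sInf_le (by rw [Set.mem_setOf_eq, key]; exact pIter_depthOf hwf hp)
  have hge : T.depthOf p + 1 ≤ T.depthOf v := by
    have hd := pIter_depthOf hwf hv
    rcases Nat.eq_zero_or_pos (T.depthOf v) with h0 | hpos
    · exact absurd (eq_root_of_depthOf_eq_zero hwf hv h0) hvr
    · obtain ⟨m, hm⟩ := Nat.exists_eq_add_of_lt hpos
      rw [hm, Nat.zero_add] at hd ⊢
      rw [key] at hd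
      exact Nat.add_le_add_right (Nat.sInf_le hd) 1
  omega

lemma depthOf_le_of_isAncestor (hwf : T.WF) {u v : V} (h : T.isAncestor u v) :
    T.depthOf u ≤ T.depthOf v := by
  induction h using Relation.ReflTransGen.head_induction_on with
  | refl => exact le_rfl
  | head hac _ ih =>
      rename_i a c _
      rw [depthOf_parent hwf hac]
      omega

lemma depthOf_lt_of_isAncestor (hwf : T.WF) {u v : V} (h : T.isAncestor u v)
    (hne : u ≠ v) : T.depthOf u < T.depthOf v := by
  rcases Relation.ReflTransGen.cases_head h with h0 | ⟨c, hvc, hcu⟩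
  · exact absurd h0.symm hne
  · have := depthOf_le_of_isAncestor hwf hcu
    rw [depthOf_parent hwf hvc]
    omega

lemma isAncestor_antisymm (hwf : T.WF) {u v : V} (h1 : T.isAncestor u v)
    (h2 : T.isAncestor v u) : u = v := by
  by_contra hne
  have := depthOf_lt_of_isAncestor hwf h1 hne
  have := depthOf_lt_of_isAncestor hwf h2 (Ne.symm hne)
  omega

lemma parent_ne_self (hwf : T.WF) {v : V} : T.parent v ≠ some v := by
  intro h
  have := depthOf_parent hwf h
  omega

lemma no_two_cycle (hwf : T.WF) {u v : V} (h1 : T.parent v = some u) :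
    T.parent u ≠ some v := by
  intro h2
  have := depthOf_parent hwf h1
  have := depthOf_parent hwf h2
  omega

lemma exists_pIter_anc (hwf : T.WF) {v : V} (hv : v ∈ T.supp) :
    ∀ k, k ≤ T.depthOf v → ∃ w, T.pIter k v = some w ∧ w ∈ T.supp ∧
      T.depthOf w = T.depthOf v - k ∧ T.isAncestor w v := by
  intro k
  induction k generalizing v with
  | zero => exact fun _ => ⟨v, rfl, hv, by omega, Relation.ReflTransGen.refl⟩
  | succ k ih =>
      intro hk
      have hvr : v ≠ T.root := by
        intro h; rw [h, depthOf_root] at hk; omega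
      obtain ⟨p, hpmem, hp⟩ := hwf.2.2.2.1 v hv hvr
      have hdp := depthOf_parent hwf hp
      obtain ⟨w, hw1, hw2, hw3, hw4⟩ := ih hpmem (by omega)
      refine ⟨w, ?_, hw2, by omega, hw4.head hp⟩
      show (T.parent v).bind (T.pIter k) = some w
      rw [hp]; exact hw1

lemma depthOf_injOn (hwf : T.WF) (hpath : T.Path) :
    ∀ d, ∀ a ∈ T.supp, ∀ b ∈ T.supp, T.depthOf a = d → T.depthOf b = d → a = b := by
  intro d
  induction d with
  | zero =>
      intro a ha b hb hda hdb
      rw [eq_root_of_depthOf_eq_zero hwf ha hda,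
        eq_root_of_depthOf_eq_zero hwf hb hdb]
  | succ d ih =>
      intro a ha b hb hda hdb
      have har : a ≠ T.root := by
        intro h; rw [h, depthOf_root] at hda; omega
      have hbr : b ≠ T.root := by
        intro h; rw [h, depthOf_root] at hdb; omega
      obtain ⟨pa, hpam, hpa⟩ := hwf.2.2.2.1 a ha har
      obtain ⟨pb, hpbm, hpb⟩ := hwf.2.2.2.1 b hb hbr
      have h1 := depthOf_parent hwf hpa
      have h2 := depthOf_parent hwf hpb
      have : pa = pb := ih pa hpam pb hpbm (by omega) (by omega)
      subst this
      exact hpath hpa hpb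

lemma depthOf_lt_card [Fintype V] (hwf : T.WF) (hsupp : T.supp = Set.univ)
    (v : V) : T.depthOf v < Fintype.card V := by
  classical
  have hv : v ∈ T.supp := hsupp ▸ Set.mem_univ v
  set d := T.depthOf v with hd
  have key : ∀ k ∈ Finset.range (d + 1),
      T.depthOf ((T.pIter k v).getD T.root) = d - k := by
    intro k hk
    rw [Finset.mem_range] at hk
    obtain ⟨w, hw1, _, hw3, _⟩ := exists_pIter_anc hwf hv k (by omega)
    rw [hw1]; exact hw3
  have hinj : Set.InjOn (fun k => (T.pIter k v).getD T.root)
      ↑(Finset.range (d + 1)) := by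
    intro k hk k' hk' he
    dsimp only at he
    have hk1 : k ∈ Finset.range (d + 1) := hk
    have hk2 : k' ∈ Finset.range (d + 1) := hk'
    have e1 := key k hk1
    have e2 := key k' hk2
    rw [he] at e1
    rw [Finset.mem_range] at hk1 hk2
    omega
  have := Finset.card_le_card_of_injOn (fun k => (T.pIter k v).getD T.root)
    (fun _ _ => Finset.mem_univ _) hinj
  simp only [Finset.card_range, Finset.card_univ] at this
  omega

end RTree
namespace RTree

variable {T : RTree V}

lemma exists_child_anc (hwf : T.WF) {x : V} (hx : x ∈ T.supp) (hxr : x ≠ T.root) :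
    ∃ c, T.parent c = some T.root ∧ x ∈ T.descendants c := by
  have h : Relation.ReflTransGen T.parentRel x T.root := hwf.2.2.2.2 x hx
  rcases Relation.ReflTransGen.cases_tail h with h0 | ⟨c, hxc, hcr⟩
  · exact absurd h0.symm hxr
  · exact ⟨c, hcr, hx, hxc⟩

lemma ne_root_of_mem_descendants (hwf : T.WF) {c x : V}
    (hc : T.parent c = some T.root) (hx : x ∈ T.descendants c) : x ≠ T.root := by
  rintro rfl
  have hcroot : c = T.root := isAncestor_antisymm hwf hx.2 (hwf.2.2.2.2 c (mem_of_parent hwf hc).1)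
  exact (mem_of_parent hwf hc).2.2 hcroot

lemma subtree_parent_eq (hwf : T.WF) {c x : V} (hc : T.parent c = some T.root)
    (hx : x ∈ T.descendants c) (hxc : x ≠ c) :
    (T.subtreeAt c).parent x = T.parent x := by
  simp [subtreeAt, hxc, hx]

/-- membership and parents inside the subtree -/
lemma descendants_step (hwf : T.WF) {c w x : V}
    (hw : w ∈ T.descendants c) (h : T.parent w = some x) (hwc : w ≠ c) :
    x ∈ T.descendants c := by
  rcases Relation.ReflTransGen.cases_head hw.2 with h0 | ⟨b, hwb, hbc⟩
  · exact absurd h0 hwc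
  · have : b = x := by
      have : T.parent w = some b := hwb
      rw [this] at h; injection h
    exact ⟨(mem_of_parent hwf h).2.1, this ▸ hbc⟩

lemma subtreeAt_WF (hwf : T.WF) (hpath : T.Path) {c : V}
    (hc : T.parent c = some T.root) : (T.subtreeAt c).WF := by
  have hcm : c ∈ T.supp := (mem_of_parent hwf hc).1
  have hcd : c ∈ T.descendants c := ⟨hcm, Relation.ReflTransGen.refl⟩
  refine ⟨hcd, by simp [subtreeAt], ?_, ?_, ?_⟩
  · intro v hv
    have hv' : v ∉ T.descendants c := hv
    by_cases hvc : v = c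
    · exact absurd (hvc ▸ hcd) hv
    · simp [subtreeAt, hvc, hv']
  · intro v hv hvc
    have hvr : v ≠ T.root := ne_root_of_mem_descendants hwf hc hv
    obtain ⟨p, hpm, hp⟩ := hwf.2.2.2.1 v hv.1 hvr
    have hpd : p ∈ T.descendants c := descendants_step hwf hv hp hvc
    exact ⟨p, hpd, by rw [subtree_parent_eq hwf hc hv hvc]; exact hp⟩
  · intro v hv
    show Relation.ReflTransGen _ v c
    have hanc : Relation.ReflTransGen T.parentRel v c := hv.2
    have hvm : v ∈ T.supp := hv.1
    clear hv
    revert hvm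
    induction hanc using Relation.ReflTransGen.head_induction_on with
    | refl => intro _; exact Relation.ReflTransGen.refl
    | head hab hbc ih =>
        rename_i a b
        intro ham
        by_cases hac : a = c
        · exact hac ▸ Relation.ReflTransGen.refl
        · have had : a ∈ T.descendants c := ⟨ham, Relation.ReflTransGen.head hab hbc⟩
          have hbm : b ∈ T.supp := (mem_of_parent hwf hab).2.1
          refine Relation.ReflTransGen.head ?_ (ih hbm)
          show (T.subtreeAt c).parent a = some b
          rw [subtree_parent_eq hwf hc had hac]
          exact hab

lemma subtreeAt_Path (hpath : T.Path) {c : V} : (T.subtreeAt c).Path := by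
  intro x w w' hw hw'
  simp only [subtreeAt] at hw hw'
  split at hw
  · simp at hw
  · split at hw
    · split at hw'
      · simp at hw'
      · split at hw'
        · exact hpath hw hw'
        · simp at hw'
    · simp at hw

end RTree
lemma reachWithin_top {s : Set V} {a b : V} (ha : a ∈ s) (hb : b ∈ s) :
    reachWithin (⊤ : SimpleGraph V) s a b := by
  by_cases hab : a = b
  · exact hab ▸ Relation.ReflTransGen.refl
  · exact Relation.ReflTransGen.single ⟨ha, hb, by simpa using hab⟩

namespace RTree

variable {T : RTree V}

/-- Search trees of the complete graph are paths. -/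
lemma path_of_isSearchTreeRec (h : IsSearchTreeRec (⊤ : SimpleGraph V) T) :
    T.Path := by
  induction h with
  | intro T hwf hconn hcomp hrec IH =>
      intro x w w' hw hw'
      by_cases hww' : w = w'
      · exact hww'
      by_cases hxr : x = T.root
      · subst hxr
        have h1 : w' ∈ T.descendants w := by
          rw [hcomp w hw w']
          exact ⟨(mem_of_parent hwf hw').1, (mem_of_parent hwf hw').2.2,
            reachWithin_top ⟨(mem_of_parent hwf hw).1, (mem_of_parent hwf hw).2.2⟩
              ⟨(mem_of_parent hwf hw').1, (mem_of_parent hwf hw').2.2⟩⟩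
        have h2 : w ∈ T.descendants w' := by
          rw [hcomp w' hw' w]
          exact ⟨(mem_of_parent hwf hw).1, (mem_of_parent hwf hw).2.2,
            reachWithin_top ⟨(mem_of_parent hwf hw').1, (mem_of_parent hwf hw').2.2⟩
              ⟨(mem_of_parent hwf hw).1, (mem_of_parent hwf hw).2.2⟩⟩
        exact isAncestor_antisymm hwf h1.2 h2.2
      · obtain ⟨c, hc, hxd⟩ := exists_child_anc hwf (mem_of_parent hwf hw).2.1 hxr
        have hwd : w ∈ T.descendants c :=
          ⟨(mem_of_parent hwf hw).1, Relation.ReflTransGen.head hw hxd.2⟩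
        have hwd' : w' ∈ T.descendants c :=
          ⟨(mem_of_parent hwf hw').1, Relation.ReflTransGen.head hw' hxd.2⟩
        have hwc : w ≠ c := by
          rintro rfl
          rw [hw] at hc; injection hc with hc; exact hxr hc
        have hwc' : w' ≠ c := by
          rintro rfl
          rw [hw'] at hc; injection hc with hc; exact hxr hc
        refine IH c hc (x := x) (w := w) (w' := w') ?_ ?_
        · show (T.subtreeAt c).parent w = some x
          rw [subtree_parent_eq hwf hc hwd hwc]; exact hw
        · show (T.subtreeAt c).parent w' = some x
          rw [subtree_parent_eq hwf hc hwd' hwc']; exact hw'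

/-- A well-founded path is a search tree of the complete graph. -/
lemma isSearchTreeRec_of_path [Fintype V] :
    ∀ n (T : RTree V), T.supp.ncard ≤ n → T.WF → T.Path →
      IsSearchTreeRec (⊤ : SimpleGraph V) T := by
  intro n
  induction n with
  | zero =>
      intro T hcard hwf _
      exfalso
      have : T.supp.Nonempty := ⟨T.root, hwf.1⟩
      have := Set.ncard_pos (Set.toFinite T.supp) |>.2 this
      omega
  | succ n ih =>
      intro T hcard hwf hpath
      refine IsSearchTreeRec.intro T hwf (fun a ha b hb => reachWithin_top ha hb) ?_ ?_
      · intro c hc w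
        constructor
        · intro hw
          have hwr := ne_root_of_mem_descendants hwf hc hw
          refine ⟨hw.1, hwr, reachWithin_top ?_ ?_⟩
          · exact ⟨(mem_of_parent hwf hc).1, (mem_of_parent hwf hc).2.2⟩
          · exact ⟨hw.1, hwr⟩
        · rintro ⟨hws, hwr, -⟩
          obtain ⟨c', hc', hwd⟩ := exists_child_anc hwf hws hwr
          rwa [hpath hc hc']
      · intro c hc
        have hsub : T.descendants c ⊆ T.supp \ {T.root} := fun x hx =>
          ⟨hx.1, ne_root_of_mem_descendants hwf hc hx⟩
        have hlt : (T.subtreeAt c).supp.ncard < T.supp.ncard := by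
          have h1 : (T.subtreeAt c).supp.ncard ≤ (T.supp \ {T.root}).ncard :=
            Set.ncard_le_ncard hsub (Set.toFinite _)
          have h2 : (T.supp \ {T.root}).ncard < T.supp.ncard := by
            refine Set.ncard_lt_ncard ?_ (Set.toFinite _)
            constructor
            · exact Set.diff_subset
            · intro habs
              exact (habs hwf.1).2 rfl
          omega
        exact ih _ (by omega) (subtreeAt_WF hwf hpath hc) (subtreeAt_Path hpath)

end RTree
namespace RTree

variable {T : RTree V}

lemma rotate_parent_eq (hwf : T.WF) (hpath : T.Path) {u v : V}
    (huv : T.parent v = some u) :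
    (rotate (⊤ : SimpleGraph V) T u v).parent
      = fun x => Option.map (Equiv.swap u v) (T.parent (Equiv.swap u v x)) := by
  have hne : u ≠ v := by rintro rfl; exact parent_ne_self hwf huv
  have hpu_ne_u : T.parent u ≠ some u := parent_ne_self hwf
  have hpu_ne_v : T.parent u ≠ some v := no_two_cycle hwf huv
  funext x
  show (if x = v then T.parent u
    else if x = u then some v
    else if T.parent x = some v then
      (if ∃ z ∈ T.descendants x, (⊤ : SimpleGraph V).Adj u z then some u else some v)
    else T.parent x) = _
  by_cases hxv : x = v
  · rw [if_pos hxv, hxv, Equiv.swap_apply_right]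
    cases hpu : T.parent u with
    | none => rfl
    | some w =>
        have hwu : w ≠ u := by rintro rfl; exact hpu_ne_u hpu
        have hwv : w ≠ v := by rintro rfl; exact hpu_ne_v hpu
        simp [Equiv.swap_apply_of_ne_of_ne hwu hwv]
  · by_cases hxu : x = u
    · rw [if_neg hxv, if_pos hxu, hxu, Equiv.swap_apply_left, huv, Option.map_some,
        Equiv.swap_apply_left]
    · rw [if_neg hxv, if_neg hxu, Equiv.swap_apply_of_ne_of_ne hxu hxv]
      by_cases hpx : T.parent x = some v
      · have hx : x ∈ T.supp := (mem_of_parent hwf hpx).1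
        rw [if_pos hpx,
          if_pos ⟨x, ⟨hx, Relation.ReflTransGen.refl⟩, by simpa using (Ne.symm hxu)⟩,
          hpx, Option.map_some, Equiv.swap_apply_right]
      · rw [if_neg hpx]
        cases hp : T.parent x with
        | none => rfl
        | some w =>
            have hwu : w ≠ u := by rintro rfl; exact hxv (hpath hp huv)
            have hwv : w ≠ v := by rintro rfl; exact hpx hp
            simp [Equiv.swap_apply_of_ne_of_ne hwu hwv]

lemma rotate_root_eq (hwf : T.WF) {u v : V} (huv : T.parent v = some u) :
    (rotate (⊤ : SimpleGraph V) T u v).root = Equiv.swap u v T.root := by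
  have hvr : v ≠ T.root := (mem_of_parent hwf huv).2.2
  show (if T.root = u then v else T.root) = _
  by_cases h : T.root = u
  · rw [if_pos h, h, Equiv.swap_apply_left]
  · rw [if_neg h, Equiv.swap_apply_of_ne_of_ne h (Ne.symm hvr)]

section Relabel

variable {T T' : RTree V} {σ : Equiv.Perm V}

lemma relabel_pIter (hσ : ∀ x, σ (σ x) = x)
    (hp : T'.parent = fun x => Option.map σ (T.parent (σ x))) :
    ∀ n x, T'.pIter n x = Option.map σ (T.pIter n (σ x)) := by
  intro n
  induction n with
  | zero => intro x; simp [pIter, hσ]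
  | succ n ih =>
      intro x
      show (T'.parent x).bind (T'.pIter n) = _
      rw [hp]
      cases h : T.parent (σ x) with
      | none => simp [pIter, h]
      | some w => simp [pIter, h, ih, hσ]

lemma relabel_depthOf (hσ : ∀ x, σ (σ x) = x)
    (hp : T'.parent = fun x => Option.map σ (T.parent (σ x)))
    (hr : T'.root = σ T.root) (x : V) : T'.depthOf x = T.depthOf (σ x) := by
  unfold depthOf
  congr 1
  ext n
  rw [Set.mem_setOf_eq, Set.mem_setOf_eq, relabel_pIter hσ hp, hr]
  cases h : T.pIter n (σ x) with
  | none => simp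
  | some w => simp [σ.injective.eq_iff]

lemma relabel_parentRel (hσ : ∀ x, σ (σ x) = x)
    (hp : T'.parent = fun x => Option.map σ (T.parent (σ x))) {a b : V} :
    T'.parentRel a b ↔ T.parentRel (σ a) (σ b) := by
  unfold parentRel
  simp only [hp]
  cases h : T.parent (σ a) with
  | none => simp [h]
  | some w =>
      simp only [Option.map_some, Option.some.injEq]
      constructor
      · rintro rfl; rw [hσ]
      · rintro rfl; rw [hσ]

lemma relabel_rtg (hσ : ∀ x, σ (σ x) = x)
    (hp : T'.parent = fun x => Option.map σ (T.parent (σ x))) {a b : V}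
    (h : Relation.ReflTransGen T.parentRel a b) :
    Relation.ReflTransGen T'.parentRel (σ a) (σ b) := by
  induction h with
  | refl => exact Relation.ReflTransGen.refl
  | tail hab hbc ih =>
      refine ih.tail ?_
      rw [relabel_parentRel hσ hp, hσ, hσ]
      exact hbc

lemma relabel_WF (hσ : ∀ x, σ (σ x) = x)
    (hp : T'.parent = fun x => Option.map σ (T.parent (σ x)))
    (hr : T'.root = σ T.root) (hwf : T.WF) (hsupp : T.supp = Set.univ)
    (hsupp' : T'.supp = Set.univ) : T'.WF := by
  refine ⟨by rw [hsupp']; trivial, ?_, ?_, ?_, ?_⟩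
  · rw [hp, hr]
    show Option.map σ (T.parent (σ (σ T.root))) = none
    rw [hσ, hwf.2.1]; rfl
  · intro w hw; exact absurd (hsupp' ▸ Set.mem_univ w) hw
  · intro w hw hwr
    have hσw : σ w ≠ T.root := by
      intro h; apply hwr; rw [hr, ← h, hσ]
    obtain ⟨z, hz, hpz⟩ := hwf.2.2.2.1 (σ w) (hsupp ▸ Set.mem_univ _) hσw
    refine ⟨σ z, hsupp' ▸ Set.mem_univ _, ?_⟩
    rw [hp]
    show Option.map σ (T.parent (σ w)) = some (σ z)
    rw [hpz]; rfl
  · intro w hw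
    have h := hwf.2.2.2.2 (σ w) (hsupp ▸ Set.mem_univ _)
    have h2 := relabel_rtg hσ hp h
    rw [hσ] at h2
    rw [← hr] at h2
    exact h2

lemma relabel_Path (hσ : ∀ x, σ (σ x) = x)
    (hp : T'.parent = fun x => Option.map σ (T.parent (σ x)))
    (hpath : T.Path) : T'.Path := by
  intro x w w' h h'
  simp only [hp] at h h'
  have h1 : T.parent (σ w) = some (σ x) := by
    cases hq : T.parent (σ w) with
    | none => rw [hq] at h; simp at h
    | some z =>
        rw [hq] at h
        simp only [Option.map_some, Option.some.injEq] at h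
        rw [show z = σ x from by rw [← h, hσ]]
  have h2 : T.parent (σ w') = some (σ x) := by
    cases hq : T.parent (σ w') with
    | none => rw [hq] at h'; simp at h'
    | some z =>
        rw [hq] at h'
        simp only [Option.map_some, Option.some.injEq] at h'
        rw [show z = σ x from by rw [← h', hσ]]
  exact σ.injective (hpath h1 h2)

end Relabel

end RTree
/-- The linear path tree on all of `V`, ordered by `Fintype.equivFin`. -/
noncomputable def pathTree (V : Type u) [Fintype V] (hn : 0 < Fintype.card V) : RTree V where
  supp := Set.univ
  root := (Fintype.equivFin V).symm ⟨0, hn⟩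
  parent := fun v =>
    if (Fintype.equivFin V v : ℕ) = 0 then none
    else some ((Fintype.equivFin V).symm ⟨(Fintype.equivFin V v : ℕ) - 1,
      lt_of_le_of_lt (Nat.sub_le _ _) (Fintype.equivFin V v).isLt⟩)

lemma pathTree_parent_spec {V : Type u} [Fintype V] (hn : 0 < Fintype.card V)
    {y z : V} (h : (pathTree V hn).parent y = some z) :
    (Fintype.equivFin V y : ℕ) ≠ 0 ∧
      (Fintype.equivFin V z : ℕ) = (Fintype.equivFin V y : ℕ) - 1 := by
  simp only [pathTree] at h
  by_cases h0 : (Fintype.equivFin V y : ℕ) = 0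
  · rw [if_pos h0] at h; simp at h
  · rw [if_neg h0] at h
    injection h with h
    refine ⟨h0, ?_⟩
    rw [← h, Equiv.apply_symm_apply]

lemma pathTree_reaches {V : Type u} [Fintype V] (hn : 0 < Fintype.card V) :
    ∀ m : ℕ, ∀ v : V, (Fintype.equivFin V v : ℕ) = m →
      Relation.ReflTransGen (pathTree V hn).parentRel v ((Fintype.equivFin V).symm ⟨0, hn⟩) := by
  intro m
  induction m with
  | zero =>
      intro v hv
      have hveq : v = (Fintype.equivFin V).symm ⟨0, hn⟩ := by
        rw [← Equiv.symm_apply_apply (Fintype.equivFin V) v]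
        congr 1
        exact Fin.ext hv
      rw [hveq]
  | succ m ih =>
      intro v hv
      have hlt := (Fintype.equivFin V v).isLt
      have hstep : (pathTree V hn).parentRel v
          ((Fintype.equivFin V).symm ⟨m, by omega⟩) := by
        show (pathTree V hn).parent v = _
        simp only [pathTree]
        rw [if_neg (by omega)]
        congr 2
        exact Fin.ext (by simp [hv])
      refine Relation.ReflTransGen.head hstep (ih _ ?_)
      simp

lemma pathTree_WF {V : Type u} [Fintype V] (hn : 0 < Fintype.card V) :
    (pathTree V hn).WF := by
  refine ⟨trivial, ?_, fun v hv => absurd trivial hv, ?_, ?_⟩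
  · show (pathTree V hn).parent _ = none
    simp only [pathTree]
    rw [if_pos]
    simp
  · intro v _ hvr
    have hv0 : (Fintype.equivFin V v : ℕ) ≠ 0 := by
      intro h0
      apply hvr
      show v = (Fintype.equivFin V).symm ⟨0, hn⟩
      rw [← Equiv.symm_apply_apply (Fintype.equivFin V) v]
      congr 1
      exact Fin.ext h0
    refine ⟨(Fintype.equivFin V).symm ⟨(Fintype.equivFin V v : ℕ) - 1,
      lt_of_le_of_lt (Nat.sub_le _ _) (Fintype.equivFin V v).isLt⟩, trivial, ?_⟩
    show (pathTree V hn).parent v = _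
    simp only [pathTree]
    rw [if_neg hv0]
  · intro v _
    exact pathTree_reaches hn _ v rfl

lemma pathTree_Path {V : Type u} [Fintype V] (hn : 0 < Fintype.card V) :
    (pathTree V hn).Path := by
  intro x w w' hw hw'
  obtain ⟨h1, h2⟩ := pathTree_parent_spec hn hw
  obtain ⟨h1', h2'⟩ := pathTree_parent_spec hn hw'
  apply (Fintype.equivFin V).injective
  exact Fin.ext (by omega)
lemma searchTree_props {T : RTree V} (h : IsSearchTreeOn (⊤ : SimpleGraph V) Set.univ T) :
    T.WF ∧ T.Path ∧ T.supp = Set.univ := by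
  obtain ⟨hsupp, hrec⟩ := h
  have hwf : T.WF := by
    cases hrec with
    | intro T hwf hconn hcomp hrec => exact hwf
  exact ⟨hwf, RTree.path_of_isSearchTreeRec hrec, hsupp⟩

noncomputable def treeFin [Fintype V] (T : RTree V) (hn : 0 < Fintype.card V) :
    V → Fin (Fintype.card V) :=
  fun v => ⟨T.depthOf v % Fintype.card V, Nat.mod_lt _ hn⟩

lemma treeFin_val [Fintype V] {T : RTree V} (hwf : T.WF) (hsupp : T.supp = Set.univ)
    (hn : 0 < Fintype.card V) (v : V) : (treeFin T hn v : ℕ) = T.depthOf v :=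
  Nat.mod_eq_of_lt (RTree.depthOf_lt_card hwf hsupp v)

lemma treeFin_bijective [Fintype V] {T : RTree V} (hwf : T.WF) (hpath : T.Path)
    (hsupp : T.supp = Set.univ) (hn : 0 < Fintype.card V) :
    Function.Bijective (treeFin T hn) := by
  rw [Fintype.bijective_iff_injective_and_card]
  refine ⟨?_, by simp⟩
  intro a b hab
  have h1 : T.depthOf a = T.depthOf b := by
    have h2 := congrArg (Fin.val) hab
    rwa [treeFin_val hwf hsupp hn, treeFin_val hwf hsupp hn] at h2
  exact RTree.depthOf_injOn hwf hpath (T.depthOf b) a (by rw [hsupp]; trivial) b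
    (by rw [hsupp]; trivial) h1 rfl

noncomputable def treePerm [Fintype V] (T : RTree V)
    (h : T.WF ∧ T.Path ∧ T.supp = Set.univ) (hn : 0 < Fintype.card V) : Equiv.Perm V :=
  (Equiv.ofBijective _ (treeFin_bijective h.1 h.2.1 h.2.2 hn)).trans
    (Fintype.equivFin V).symm

lemma treePerm_rotate [Fintype V] {T T' : RTree V}
    (h : T.WF ∧ T.Path ∧ T.supp = Set.univ) (h' : T'.WF ∧ T'.Path ∧ T'.supp = Set.univ)
    {u v : V} (huv : T.parent v = some u) (heq : T' = rotate (⊤ : SimpleGraph V) T u v)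
    (hn : 0 < Fintype.card V) :
    treePerm T' h' hn = treePerm T h hn * Equiv.swap u v := by
  have hp : T'.parent
      = fun x => Option.map (Equiv.swap u v) (T.parent (Equiv.swap u v x)) := by
    rw [heq]; exact RTree.rotate_parent_eq h.1 h.2.1 huv
  have hr : T'.root = Equiv.swap u v T.root := by
    rw [heq]; exact RTree.rotate_root_eq h.1 huv
  have hdepth : ∀ x, T'.depthOf x = T.depthOf (Equiv.swap u v x) :=
    RTree.relabel_depthOf (fun x => Equiv.swap_apply_self u v x) hp hr
  ext x
  rw [Equiv.Perm.mul_apply]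
  show (Fintype.equivFin V).symm (treeFin T' hn x)
      = (Fintype.equivFin V).symm (treeFin T hn (Equiv.swap u v x))
  congr 1
  apply Fin.ext
  show T'.depthOf x % _ = T.depthOf (Equiv.swap u v x) % _
  rw [hdepth]
/-- if `G` is complete with at least 3 vertices, then `R(G)` is bipartite
with chromatic number 2. -/
theorem rotationGraph_complete_chromaticNumber {V : Type u} [Fintype V] (G : SimpleGraph V)
    (h3 : 3 ≤ Fintype.card V) (hc : G = ⊤) :
    (rotationGraphOn G Set.univ).Colorable 2 ∧
      (rotationGraphOn G Set.univ).chromaticNumber = 2 := by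
  subst hc
  have hn0 : 0 < Fintype.card V := by omega
  -- the sign comparison helper
  have signs : ∀ s s' : ℤˣ, s' = s * -1 → decide (s' = 1) ≠ decide (s = 1) := by
    intro s s' h
    rcases Int.units_eq_one_or s with rfl | rfl <;> subst h <;> decide
  -- the 2-coloring by sign of the permutation
  let C : (rotationGraphOn (⊤ : SimpleGraph V) Set.univ).Coloring Bool :=
    SimpleGraph.Coloring.mk
      (fun T => decide (Equiv.Perm.sign (treePerm T.1 (searchTree_props T.2) hn0) = 1))
      (by
        intro a b hab
        obtain ⟨hne, hor⟩ : rotAdj _ a.1 b.1 := hab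
        rcases hor with hR | hR
        · obtain ⟨u, v, huv, hrot⟩ := hR
          have hne_uv : u ≠ v := by
            rintro rfl; exact RTree.parent_ne_self (searchTree_props a.2).1 huv
          have hperm := treePerm_rotate (searchTree_props a.2) (searchTree_props b.2)
            huv hrot hn0
          have hsign : Equiv.Perm.sign (treePerm b.1 (searchTree_props b.2) hn0)
              = Equiv.Perm.sign (treePerm a.1 (searchTree_props a.2) hn0) * (-1) := by
            rw [hperm, map_mul, Equiv.Perm.sign_swap hne_uv]
          exact (signs _ _ hsign).symm
        · obtain ⟨u, v, huv, hrot⟩ := hR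
          have hne_uv : u ≠ v := by
            rintro rfl; exact RTree.parent_ne_self (searchTree_props b.2).1 huv
          have hperm := treePerm_rotate (searchTree_props b.2) (searchTree_props a.2)
            huv hrot hn0
          have hsign : Equiv.Perm.sign (treePerm a.1 (searchTree_props a.2) hn0)
              = Equiv.Perm.sign (treePerm b.1 (searchTree_props b.2) hn0) * (-1) := by
            rw [hperm, map_mul, Equiv.Perm.sign_swap hne_uv]
          exact signs _ _ hsign)
  have hcol2 : (rotationGraphOn (⊤ : SimpleGraph V) Set.univ).Colorable 2 := by
    have h := C.colorable
    rwa [Fintype.card_bool] at h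
  -- an explicit edge of the rotation graph
  have h1lt : 1 < Fintype.card V := by omega
  set u : V := (Fintype.equivFin V).symm ⟨0, hn0⟩ with hu
  set v : V := (Fintype.equivFin V).symm ⟨1, h1lt⟩ with hv
  have hune : u ≠ v := by
    intro h
    have := (Fintype.equivFin V).symm.injective h
    simp at this
  have huv : (pathTree V hn0).parent v = some u := by
    rw [hv, hu]
    simp only [pathTree, Equiv.apply_symm_apply]
    rw [if_neg (by norm_num)]
  have hT0 : IsSearchTreeOn (⊤ : SimpleGraph V) Set.univ (pathTree V hn0) :=
    ⟨rfl, RTree.isSearchTreeRec_of_path _ _ le_rfl (pathTree_WF hn0) (pathTree_Path hn0)⟩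
  set T1 : RTree V := rotate (⊤ : SimpleGraph V) (pathTree V hn0) u v with hT1def
  have hp1 : T1.parent
      = fun x => Option.map (Equiv.swap u v) ((pathTree V hn0).parent (Equiv.swap u v x)) :=
    RTree.rotate_parent_eq (pathTree_WF hn0) (pathTree_Path hn0) huv
  have hr1 : T1.root = Equiv.swap u v (pathTree V hn0).root :=
    RTree.rotate_root_eq (pathTree_WF hn0) huv
  have hswap : ∀ x, Equiv.swap u v (Equiv.swap u v x) = x := fun x => Equiv.swap_apply_self u v x
  have hT1wf : T1.WF := RTree.relabel_WF hswap hp1 hr1 (pathTree_WF hn0) rfl rfl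
  have hT1path : T1.Path := RTree.relabel_Path hswap hp1 (pathTree_Path hn0)
  have hT1 : IsSearchTreeOn (⊤ : SimpleGraph V) Set.univ T1 :=
    ⟨rfl, RTree.isSearchTreeRec_of_path _ _ le_rfl hT1wf hT1path⟩
  have hne01 : pathTree V hn0 ≠ T1 := by
    intro h
    have h2 : (pathTree V hn0).parent u = T1.parent u := by rw [← h]
    have h3 : (pathTree V hn0).parent u = none := by
      simp [pathTree, hu, Equiv.apply_symm_apply]
    have h4 : T1.parent u = some v := by
      rw [hp1]
      show Option.map (Equiv.swap u v) ((pathTree V hn0).parent (Equiv.swap u v u)) = some v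
      rw [Equiv.swap_apply_left, huv]
      show some (Equiv.swap u v u) = some v
      rw [Equiv.swap_apply_left]
    rw [h3, h4] at h2
    simp at h2
  have hedge : (rotationGraphOn (⊤ : SimpleGraph V) Set.univ).Adj
      ⟨pathTree V hn0, hT0⟩ ⟨T1, hT1⟩ :=
    (⟨hne01, Or.inl ⟨u, v, huv, hT1def⟩⟩ : rotAdj _ _ _)
  have hnc1 : ¬ (rotationGraphOn (⊤ : SimpleGraph V) Set.univ).Colorable 1 := by
    rintro ⟨C1⟩
    exact C1.valid hedge (Subsingleton.elim _ _)
  refine ⟨hcol2, le_antisymm ?_ ?_⟩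
  · have h := hcol2.chromaticNumber_le
    exact_mod_cast h
  · by_contra hlt
    push_neg at hlt
    have hle1 : (rotationGraphOn (⊤ : SimpleGraph V) Set.univ).chromaticNumber ≤ 1 :=
      Order.le_of_lt_add_one (by exact_mod_cast hlt)
    have : (rotationGraphOn (⊤ : SimpleGraph V) Set.univ).Colorable 1 := by
      rw [← SimpleGraph.chromaticNumber_le_iff_colorable]
      exact_mod_cast hle1
    exact hnc1 this
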